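/- Let F be a partial E-field, let A be any subset of F, and let x̄ and ȳ be finite tuples from F. Then the predimension function satisfies the addition property: Δ_F(x̄ ∪ ȳ / A) = Δ_F(x̄ / A ∪ ȳ) + Δ_F(ȳ / A). -/

import Mathlib

noncomputable section
open scoped Pointwise
open Cardinal

namespace Paper

variable (F : Type*) [Field F] [CharZero F]

/-- `td F X Y` : the transcendence degree of the field `ℚ(X ∪ Y)` over `ℚ(X)`,
computed as the supremum of cardinalities of subsets of `Y` which are algebraically
independent over the subfield generated by `X`. -/
def td (X Y : Set F) : Cardinal :=
  ⨆ p : {s : Set F // s ⊆ Y ∧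
      AlgebraicIndependent (IntermediateField.adjoin ℚ X) (fun y : s => (y : F))},
    Cardinal.mk p.1

/-- Natural-number valued relative transcendence degree. -/
def tdN (X Y : Set F) : ℕ := (td F X Y).toNat

/-- `ldim F X Y` : the dimension of the quotient of the `ℚ`-span of `X ∪ Y`
by the `ℚ`-span of `X`, i.e. `ldim_ℚ(Y/X)`. -/
def ldim (X Y : Set F) : Cardinal :=
  Module.rank ℚ (Submodule.span ℚ ((Submodule.span ℚ X).mkQ '' Y))

/-- Natural-number valued relative linear dimension. -/
def ldimN (X Y : Set F) : ℕ := (ldim F X Y).toNat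

/-- The Schanuel property for a total exponential map:
`td(x̄ ∪ exp(x̄)/∅) ≥ ldim_ℚ(x̄/∅)` for every finite tuple `x̄`. -/
def Schanuel (exp : F → F) : Prop :=
  ∀ s : Finset F, ldim F ∅ ↑s ≤ td F ∅ (↑s ∪ exp '' ↑s)

/-- A partial E-field structure on a field `F` of characteristic zero: a `ℚ`-subspace
`D`, and an exponential map which is a homomorphism from `D` to `Fˣ`. -/
structure PEField (F : Type*) [Field F] [CharZero F] where
  D : Submodule ℚ F
  exp : F → F
  exp_ne_zero : ∀ a ∈ D, exp a ≠ 0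
  exp_add : ∀ a ∈ D, ∀ b ∈ D, exp (a + b) = exp a * exp b

namespace PEField

variable {F} (E : PEField F)

/-- The kernel of the exponential map, as a set. -/
def kerSet : Set F := {a | a ∈ E.D ∧ E.exp a = 1}

lemma exp_zero : E.exp 0 = 1 := by
  have h0 : (0 : F) ∈ E.D := E.D.zero_mem
  have h := E.exp_add 0 h0 0 h0
  rw [add_zero] at h
  have hne := E.exp_ne_zero 0 h0
  have h' : E.exp 0 * 1 = E.exp 0 * E.exp 0 := by rw [mul_one]; exact h
  exact (mul_left_cancel₀ hne h').symm

/-- The kernel of the exponential map, as an additive subgroup of `F`. -/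
def ker : AddSubgroup F where
  carrier := {a | a ∈ E.D ∧ E.exp a = 1}
  zero_mem' := ⟨E.D.zero_mem, E.exp_zero⟩
  add_mem' := by
    rintro a b ⟨haD, ha⟩ ⟨hbD, hb⟩
    exact ⟨E.D.add_mem haD hbD, by rw [E.exp_add a haD b hbD, ha, hb, mul_one]⟩
  neg_mem' := by
    rintro a ⟨haD, ha⟩
    refine ⟨E.D.neg_mem haD, ?_⟩
    have h := E.exp_add a haD (-a) (E.D.neg_mem haD)
    rw [add_neg_cancel, E.exp_zero, ha, one_mul] at h
    exact h.symm

/-- The image `I(F)` of the exponential map. -/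
def img : Set F := E.exp '' (E.D : Set F)

/-- `F` has full kernel iff every root of unity lies in the image of `exp`. -/
def FullKernel : Prop :=
  ∀ x : F, (∃ m : ℕ, 0 < m ∧ x ^ m = 1) → x ∈ E.exp '' (E.D : Set F)

/-- `F` has very full kernel iff every coherent system of roots of unity is of the
form `(exp (a/m))_{m ≥ 1}` for some `a ∈ D(F)`. -/
def VeryFullKernel : Prop :=
  ∀ c : ℕ → F, c 1 = 1 → (∀ r m : ℕ, 0 < r → 0 < m → c (r * m) ^ r = c m) →
    ∃ a ∈ E.D, ∀ m : ℕ, 0 < m → E.exp (a / (m : F)) = c m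

end PEField

/-- A partial E-subfield of a partial E-field: a subfield together with a `ℚ`-subspace
of `D(F)` contained in it, closed under the exponential map. -/
structure ESub {F : Type*} [Field F] [CharZero F] (E : PEField F) where
  carrier : Subfield F
  dom : Submodule ℚ F
  dom_le : dom ≤ E.D
  dom_sub : (dom : Set F) ⊆ (carrier : Set F)
  exp_mem : ∀ a ∈ dom, E.exp a ∈ carrier

namespace ESub

variable {F : Type*} [Field F] [CharZero F] {E : PEField F}

/-- The kernel of a partial E-subfield. -/
def kerSet (A : ESub E) : Set F := {a | a ∈ A.dom ∧ E.exp a = 1}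

/-- Inclusion (extension) of partial E-subfields. -/
def le (A B : ESub E) : Prop := A.carrier ≤ B.carrier ∧ A.dom ≤ B.dom

end ESub

/-- The whole of a partial E-field, viewed as a partial E-subfield of itself. -/
def PEField.top {F : Type*} [Field F] [CharZero F] (E : PEField F) : ESub E where
  carrier := ⊤
  dom := E.D
  dom_le := le_rfl
  dom_sub := fun x _ => Subfield.mem_top x
  exp_mem := fun a _ => Subfield.mem_top _

variable {F}

/-- The relative predimension function `Δ_B(x̄/A)` for an extension `A ⊆ B` of
partial E-(sub)fields:
`td(x̄ ∪ exp(x̄ ∩ D(B)) / A ∪ ker(B)) − ldim_ℚ(x̄ ∩ D(B) / D(A) ∪ ker(B))`. -/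
def Delta (E : PEField F) (A B : ESub E) (s : Finset F) : ℤ :=
  (tdN F ((A.carrier : Set F) ∪ B.kerSet) (↑s ∪ E.exp '' (↑s ∩ (B.dom : Set F))) : ℤ) -
    (ldimN F ((A.dom : Set F) ∪ B.kerSet) (↑s ∩ (B.dom : Set F)) : ℤ)

/-- The extension `A ⊆ B` of partial E-(sub)fields is semi-strong: `Δ_B(x̄/A) ≥ 0`
for all tuples `x̄` from `B`, and `A` is algebraically free from `ker(B)` over `ker(A)`. -/
def SemiStrong (E : PEField F) (A B : ESub E) : Prop :=
  (∀ s : Finset F, ↑s ⊆ (B.carrier : Set F) → 0 ≤ Delta E A B s) ∧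
  (∀ t : Finset F, ↑t ⊆ (A.carrier : Set F) →
    tdN F (A.kerSet ∪ B.kerSet) ↑t = tdN F A.kerSet ↑t)

/-- The predimension `δ(ā/X)` of a finite tuple over a subset `X` of a partial E-field:
`td(ā ∪ exp(ā ∩ D) / X ∪ exp(X ∩ D)) − ldim_ℚ(ā/X)`. -/
def deltaSet (E : PEField F) (X : Set F) (s : Finset F) : ℤ :=
  (tdN F (X ∪ E.exp '' (X ∩ (E.D : Set F))) (↑s ∪ E.exp '' (↑s ∩ (E.D : Set F))) : ℤ) -
    (ldimN F X ↑s : ℤ)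

lemma span_le_subfield {K : Subfield F} {S : Set F} (h : S ⊆ (K : Set F)) :
    ((Submodule.span ℚ S : Submodule ℚ F) : Set F) ⊆ (K : Set F) := by
  intro x hx
  induction hx using Submodule.span_induction with
  | mem x hx => exact h hx
  | zero => exact zero_mem K
  | add x y _ _ hx hy => exact add_mem hx hy
  | smul q x _ hx => rw [Rat.smul_def]; exact mul_mem (SubfieldClass.ratCast_mem K q) hx

/-- The partial E-subfield `⟨X⟩_F` generated by a subset `X`: its domain is
`span_ℚ(X ∩ D(F))` and its field is generated by `X ∪ exp(span_ℚ(X ∩ D(F)))`. -/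
def genSub (E : PEField F) (X : Set F) : ESub E where
  carrier := Subfield.closure
    (X ∪ E.exp '' ((Submodule.span ℚ (X ∩ (E.D : Set F)) : Submodule ℚ F) : Set F))
  dom := Submodule.span ℚ (X ∩ (E.D : Set F))
  dom_le := Submodule.span_le.mpr Set.inter_subset_right
  dom_sub := by
    refine span_le_subfield ?_
    intro x hx
    exact Subfield.subset_closure (Set.mem_union_left _ hx.1)
  exp_mem := fun a ha => Subfield.subset_closure (Set.mem_union_right _ ⟨a, ha, rfl⟩)

/-- `Δ_F(x̄/B)` for an arbitrary subset `B` : the predimension of `x̄` over the partial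
E-subfield `⟨ker(F) ∪ B⟩_F`. -/
def DeltaOver (E : PEField F) (B : Set F) (s : Finset F) : ℤ :=
  Delta E (genSub E (E.kerSet ∪ B)) E.top s

/-- The natural map `Fˣ → ℚ ⊗[ℤ] Additive Fˣ`. -/
def toQV : Fˣ → TensorProduct ℤ ℚ (Additive Fˣ) :=
  fun u => TensorProduct.tmul ℤ (1 : ℚ) (Additive.ofMul u)

/-- The multiplicative rank `mrk(B/H)` : the dimension of the `ℚ`-span of the image of
`B` in `ℚ ⊗_ℤ Fˣ`, modulo the `ℚ`-span of the image of `H`. -/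
def mrk (H B : Set Fˣ) : ℕ :=
  (Module.rank ℚ (Submodule.span ℚ
    ((Submodule.span ℚ (toQV '' H)).mkQ '' (toQV '' B)))).toNat

/-- The set of units lying in a given subset of `F`. -/
def unitsOf (S : Set F) : Set Fˣ := {u : Fˣ | (u : F) ∈ S}

/-- The partial E-subfield with underlying set `X` and domain `DX` is semi-strong in
the partial E-field `E`. -/
def SemiStrongSet (E : PEField F) (X DX : Set F) : Prop :=
  (∀ s : Finset F,
    0 ≤ (tdN F (X ∪ E.kerSet) (↑s ∪ E.exp '' (↑s ∩ (E.D : Set F))) : ℤ) -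
        (ldimN F (DX ∪ E.kerSet) (↑s ∩ (E.D : Set F)) : ℤ)) ∧
  (∀ t : Finset F, ↑t ⊆ X →
    tdN F ({a ∈ DX | E.exp a = 1} ∪ E.kerSet) ↑t = tdN F {a ∈ DX | E.exp a = 1} ↑t)

/-- An ELA-field: an algebraically closed field of characteristic zero together with a
total exponential map which is surjective onto the multiplicative group. -/
structure ELAField (K : Type*) [Field K] [CharZero K] where
  exp : K → K
  exp_ne_zero : ∀ x, exp x ≠ 0
  exp_add : ∀ x y, exp (x + y) = exp x * exp y
  alg_closed : IsAlgClosed K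
  exp_surj : ∀ y : K, y ≠ 0 → ∃ x, exp x = y

/-- An ELA-field regarded as a (total) partial E-field. -/
def ELAField.toPE {K : Type*} [Field K] [CharZero K] (L : ELAField K) : PEField K :=
  ⟨⊤, L.exp, fun a _ => L.exp_ne_zero a, fun a _ b _ => L.exp_add a b⟩

/-- `S` is an ELA-closed subfield of the ELA-field `K`: it is (the underlying set of) a
subfield, closed under `exp`, contains an `exp`-preimage of each of its nonzero elements,
and is relatively algebraically closed in `K`. -/
def IsELASub {K : Type*} [Field K] [CharZero K] (L : ELAField K) (S : Set K) : Prop :=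
  (∃ Sf : Subfield K, (Sf : Set K) = S) ∧
  (∀ x ∈ S, L.exp x ∈ S) ∧
  (∀ y ∈ S, y ≠ 0 → ∃ x ∈ S, L.exp x = y) ∧
  (∀ x : K, ∀ p : Polynomial K, p ≠ 0 → (∀ i, p.coeff i ∈ S) →
    Polynomial.eval x p = 0 → x ∈ S)

/-- `S = ⟨A⟩^{ELA}_K` : `S` is the smallest ELA-closed subfield of `K` containing `A`. -/
def IsELAGen {K : Type*} [Field K] [CharZero K] (L : ELAField K) (A S : Set K) : Prop :=
  IsELASub L S ∧ A ⊆ S ∧ ∀ T : Set K, IsELASub L T → A ⊆ T → S ⊆ T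



section PredimensionTheory
set_option linter.unusedSectionVars false
set_option synthInstance.maxHeartbeats 1000000
set_option maxHeartbeats 1600000


/-- transfer of algebraicity along a compatible ring hom -/
lemma alg_transfer {R S : Type*} [CommRing R] [CommRing S] [Algebra R F] [Algebra S F]
    (f : R →+* S) (hcomp : ∀ r, algebraMap S F (f r) = algebraMap R F r)
    (hinj : Function.Injective (algebraMap R F)) {a : F} (h : IsAlgebraic R a) :
    IsAlgebraic S a := by
  obtain ⟨p, hp, hpa⟩ := h
  have hfinj : Function.Injective f := fun x y hxy => hinj (by rw [← hcomp, hxy, hcomp])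
  refine ⟨p.map f, ?_, ?_⟩
  · intro h0
    exact hp (Polynomial.map_injective f hfinj (by simpa using h0))
  · rw [Polynomial.aeval_def, Polynomial.eval₂_map]
    rw [Polynomial.aeval_def] at hpa
    rw [show (algebraMap S F).comp f = algebraMap R F from RingHom.ext hcomp]
    exact hpa

/-- algebraic over the field generated by `X` -/
def algOver (X : Set F) (a : F) : Prop := IsAlgebraic (IntermediateField.adjoin ℚ X) a

lemma alg_mono {X Y : Set F} (h : X ⊆ Y) {a : F} (ha : algOver X a) : algOver Y a := by
  refine alg_transfer ((IntermediateField.inclusion (IntermediateField.adjoin.mono ℚ X Y h))).toRingHom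
    (fun r => by rfl) (Subtype.val_injective) ha

lemma alg_of_mem_adjoin {X : Set F} {a : F} (h : a ∈ IntermediateField.adjoin ℚ X) :
    algOver X a :=
  isAlgebraic_algebraMap (⟨a, h⟩ : IntermediateField.adjoin ℚ X)

lemma alg_of_mem {X : Set F} {a : F} (h : a ∈ X) : algOver X a :=
  alg_of_mem_adjoin (IntermediateField.subset_adjoin ℚ X h)

lemma adjoin_adjoin_coe (X S : Set F) :
    (IntermediateField.adjoin (IntermediateField.adjoin ℚ X) S : Set F) =
      (IntermediateField.adjoin ℚ (X ∪ S) : Set F) := by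
  rw [← IntermediateField.adjoin_adjoin_left]
  rfl


variable {F : Type*} [Field F] [CharZero F]

lemma frac_subfield (K : IntermediateField ℚ F) (S : Set F) :
    ∀ z : F, z ∈ IntermediateField.adjoin K S →
      ∃ p ∈ Algebra.adjoin K S, ∃ q ∈ Algebra.adjoin K S, q ≠ 0 ∧ z * q = p := by
  set R := Algebra.adjoin K S with hR
  let T : Subfield F :=
    { carrier := {w : F | ∃ p ∈ R, ∃ q ∈ R, q ≠ 0 ∧ w * q = p}
      zero_mem' := ⟨0, zero_mem R, 1, one_mem R, one_ne_zero, by ring⟩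
      one_mem' := ⟨1, one_mem R, 1, one_mem R, one_ne_zero, by ring⟩
      add_mem' := by
        rintro a b ⟨p, hp, q, hq, hq0, hab⟩ ⟨p', hp', q', hq', hq0', hab'⟩
        exact ⟨p * q' + p' * q, add_mem (mul_mem hp hq') (mul_mem hp' hq),
          q * q', mul_mem hq hq', mul_ne_zero hq0 hq0', by
            rw [← hab, ← hab']; ring⟩
      neg_mem' := by
        rintro a ⟨p, hp, q, hq, hq0, h⟩
        exact ⟨-p, neg_mem hp, q, hq, hq0, by rw [neg_mul, h]⟩
      mul_mem' := by
        rintro a b ⟨p, hp, q, hq, hq0, hab⟩ ⟨p', hp', q', hq', hq0', hab'⟩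
        exact ⟨p * p', mul_mem hp hp', q * q', mul_mem hq hq',
          mul_ne_zero hq0 hq0', by rw [← hab, ← hab']; ring⟩
      inv_mem' := by
        intro a ha
        obtain ⟨p, hp, q, hq, hq0, h⟩ := ha
        by_cases ha0 : a = 0
        · exact ⟨0, zero_mem R, 1, one_mem R, one_ne_zero, by rw [ha0]; simp⟩
        · have hp0 : p ≠ 0 := by
            rw [← h]; exact mul_ne_zero ha0 hq0
          exact ⟨q, hq, p, hp, hp0, by
            field_simp
            rw [← h]⟩ }
  let T' : IntermediateField K F :=
    { T with
      algebraMap_mem' := fun k =>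
        ⟨algebraMap K F k, Subalgebra.algebraMap_mem R k, 1, one_mem R, one_ne_zero, mul_one _⟩ }
  intro z hz
  have hle : IntermediateField.adjoin K S ≤ T' :=
    IntermediateField.adjoin_le_iff.mpr
      (fun s hs => ⟨s, Algebra.subset_adjoin hs, 1, one_mem R, one_ne_zero, mul_one _⟩)
  exact hle hz

lemma alg_ring_adjoin_iff (K : IntermediateField ℚ F) (S : Set F) (a : F) :
    IsAlgebraic (Algebra.adjoin K S) a ↔ IsAlgebraic (IntermediateField.adjoin K S) a := by
  letI : Algebra (Algebra.adjoin K S) (IntermediateField.adjoin K S) :=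
    (Subalgebra.inclusion (IntermediateField.algebra_adjoin_le_adjoin K S)).toRingHom.toAlgebra
  haveI : IsScalarTower (Algebra.adjoin K S) (IntermediateField.adjoin K S) F :=
    IsScalarTower.of_algebraMap_eq (congrFun rfl)
  haveI : IsFractionRing (Algebra.adjoin K S) (IntermediateField.adjoin K S) := by
    refine ⟨?_, ?_, ?_⟩
    · rintro ⟨y, hy⟩
      rw [isUnit_iff_ne_zero]
      have hy0 : (y : F) ≠ 0 := by
        intro h0
        exact absurd (Subtype.ext h0 : y = 0) (nonZeroDivisors.ne_zero hy)
      intro h0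
      exact hy0 (congrArg Subtype.val h0)
    · intro z
      obtain ⟨p, hp, q, hq, hq0, hz⟩ := frac_subfield K S (z : F) z.2
      refine ⟨⟨⟨p, hp⟩, ⟨⟨q, hq⟩, mem_nonZeroDivisors_of_ne_zero
        (fun h => hq0 (congrArg Subtype.val h))⟩⟩, ?_⟩
      exact Subtype.ext hz
    · intro x y h
      have h2 := congrArg (Subtype.val : _ → F) h
      have hxy : x = y := Subtype.ext h2
      exact ⟨1, by rw [hxy]⟩
  exact IsFractionRing.isAlgebraic_iff (Algebra.adjoin K S) (IntermediateField.adjoin K S) F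


lemma mem_union_adjoin_of_mem_adjoin {X S : Set F} {x : F}
    (hx : x ∈ IntermediateField.adjoin (IntermediateField.adjoin ℚ X) S) :
    x ∈ IntermediateField.adjoin ℚ (X ∪ S) := by
  have h := adjoin_adjoin_coe X S
  rw [Set.ext_iff] at h
  exact (h x).1 hx

lemma mem_adjoin_of_mem_union_adjoin {X S : Set F} {x : F}
    (hx : x ∈ IntermediateField.adjoin ℚ (X ∪ S)) :
    x ∈ IntermediateField.adjoin (IntermediateField.adjoin ℚ X) S := by
  have h := adjoin_adjoin_coe X S
  rw [Set.ext_iff] at h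
  exact (h x).2 hx

lemma alg_algebra_adjoin_iff (X S : Set F) (a : F) :
    IsAlgebraic (Algebra.adjoin (IntermediateField.adjoin ℚ X) S) a ↔ algOver (X ∪ S) a := by
  rw [alg_ring_adjoin_iff]
  constructor
  · intro h
    let f : (IntermediateField.adjoin (IntermediateField.adjoin ℚ X) S) →+*
        (IntermediateField.adjoin ℚ (X ∪ S)) :=
      { toFun := fun x => ⟨x.1, mem_union_adjoin_of_mem_adjoin x.2⟩,
        map_one' := rfl, map_mul' := fun _ _ => rfl,
        map_zero' := rfl, map_add' := fun _ _ => rfl }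
    refine alg_transfer f (fun r => ?_) Subtype.val_injective h
    rfl
  · intro h
    let f : (IntermediateField.adjoin ℚ (X ∪ S)) →+*
        (IntermediateField.adjoin (IntermediateField.adjoin ℚ X) S) :=
      { toFun := fun x => ⟨x.1, mem_adjoin_of_mem_union_adjoin x.2⟩,
        map_one' := rfl, map_mul' := fun _ _ => rfl,
        map_zero' := rfl, map_add' := fun _ _ => rfl }
    refine alg_transfer f (fun r => ?_) Subtype.val_injective h
    rfl

/-- algebraic independence of a subset over the field generated by `X` -/
def AInd (X : Set F) (s : Set F) : Prop :=
  AlgebraicIndependent (IntermediateField.adjoin ℚ X) ((↑) : s → F)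

lemma aInd_base_down {X Y : Set F} (h : X ⊆ Y) {s : Set F} (hx : AInd Y s) : AInd X s := by
  rw [AInd, algebraicIndependent_iff] at hx ⊢
  intro p hp
  set f := (IntermediateField.inclusion (IntermediateField.adjoin.mono ℚ X Y h)).toRingHom with hf
  have finj : Function.Injective f := IntermediateField.inclusion_injective _
  have h1 : MvPolynomial.aeval ((↑) : s → F) (MvPolynomial.map f p) = 0 := by
    rw [MvPolynomial.aeval_def, MvPolynomial.eval₂_map]
    rw [show (algebraMap (IntermediateField.adjoin ℚ Y) F).comp f =
      algebraMap (IntermediateField.adjoin ℚ X) F from RingHom.ext fun r => rfl]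
    rw [MvPolynomial.aeval_def] at hp
    exact hp
  have h2 := hx _ h1
  exact MvPolynomial.map_injective f finj (by rw [h2, map_zero])

lemma aInd_insert_iff {X : Set F} {s : Set F} {a : F} (ha : a ∉ s) :
    AInd X (insert a s) ↔ AInd X s ∧ ¬ algOver (X ∪ s) a := by
  haveI := Classical.decEq F
  constructor
  · intro h
    have hs : AInd X s := h.mono (Set.subset_insert a s)
    have hopt : AlgebraicIndependent (IntermediateField.adjoin ℚ X)
        (fun o : Option s => o.elim a (↑)) := by
      have h2 := h.comp (Set.subtypeInsertEquivOption ha).symm (Equiv.injective _)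
      have hfe : (fun o : Option s => o.elim a (↑)) =
          (fun y : (insert a s : Set F) => (y : F)) ∘ (Set.subtypeInsertEquivOption ha).symm := by
        ext o
        cases o <;> simp [Set.subtypeInsertEquivOption]
      rw [hfe]
      exact h2
    have htr := (hs.option_iff_transcendental a).1 hopt
    rw [Subtype.range_coe] at htr
    exact ⟨hs, fun halg => htr ((alg_algebra_adjoin_iff X s a).2 halg)⟩
  · rintro ⟨hs, htr⟩
    have htr' : Transcendental (Algebra.adjoin (IntermediateField.adjoin ℚ X) s) a :=
      fun halg => htr ((alg_algebra_adjoin_iff X s a).1 halg)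
    have hopt := (hs.option_iff_transcendental a).2 (by rw [Subtype.range_coe]; exact htr')
    have h3 := hopt.comp (Set.subtypeInsertEquivOption ha) (Equiv.injective _)
    have hfe : (fun y : (insert a s : Set F) => (y : F)) =
        (fun o : Option s => o.elim a (↑)) ∘ (Set.subtypeInsertEquivOption ha) := by
      ext x
      by_cases hx : (x : F) = a <;> simp [Set.subtypeInsertEquivOption, hx]
    rw [AInd]
    show AlgebraicIndependent (IntermediateField.adjoin ℚ X)
      (fun y : (insert a s : Set F) => (y : F))
    rw [hfe]
    exact h3

lemma aInd_diff_singleton {X u : Set F} {a : F} (h : AInd X u) (ha : a ∈ u) :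
    ¬ algOver (X ∪ (u \ {a})) a := by
  have he : insert a (u \ {a}) = u := by
    rw [Set.insert_diff_singleton, Set.insert_eq_self.2 ha]
  have h2 : AInd X (insert a (u \ {a})) := by rw [he]; exact h
  exact ((aInd_insert_iff (by simp)).1 h2).2

lemma alg_trans {V W : Set F} {a : F} (hW : ∀ b ∈ W, algOver V b)
    (h : algOver (V ∪ W) a) : algOver V a := by
  set L := IntermediateField.adjoin ℚ V
  set M := IntermediateField.adjoin L W with hM
  haveI hMA : Algebra.IsAlgebraic L M :=
    IntermediateField.isAlgebraic_adjoin
      (fun x hx => (isAlgebraic_iff_isIntegral).1 (hW x hx))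
  have haM : IsAlgebraic M a := by
    let f : (IntermediateField.adjoin ℚ (V ∪ W)) →+* M :=
      { toFun := fun x => ⟨x.1, mem_adjoin_of_mem_union_adjoin x.2⟩,
        map_one' := rfl, map_mul' := fun _ _ => rfl,
        map_zero' := rfl, map_add' := fun _ _ => rfl }
    refine alg_transfer f (fun r => ?_) Subtype.val_injective h
    rfl
  haveI : Algebra.IsIntegral L M := Algebra.isAlgebraic_iff_isIntegral.1 hMA
  have : IsIntegral L a := isIntegral_trans (A := M) a ((isAlgebraic_iff_isIntegral).1 haM)
  exact this.isAlgebraic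

lemma exists_max_aInd (X : Set F) (Y : Set F) :
    ∃ m : Set F, m ⊆ Y ∧ AInd X m ∧ ∀ y ∈ Y, algOver (X ∪ m) y := by
  obtain ⟨u, -, hmax⟩ := exists_maximal_algebraicIndependent (∅ : Set F) Y
      (Set.empty_subset _) (algebraicIndependent_empty (K := IntermediateField.adjoin ℚ X))
  have hu : AInd X u := hmax.prop.1
  have huY : u ⊆ Y := hmax.prop.2
  refine ⟨u, huY, hu, ?_⟩
  intro y hy
  by_cases hyu : y ∈ u
  · exact alg_of_mem (Or.inr hyu)
  · by_contra halg
    have hins : AInd X (insert y u) := (aInd_insert_iff hyu).2 ⟨hu, halg⟩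
    have hle := hmax.le_of_ge ⟨hins, Set.insert_subset hy huY⟩ (Set.subset_insert y u)
    exact hyu (hle (Set.mem_insert y u))

section Steinitz
variable [DecidableEq F]

lemma steinitz (X : Set F) : ∀ (n : ℕ) (u s : Finset F), (u \ s).card = n →
    AInd X ↑u → (∀ x ∈ u, algOver (X ∪ ↑s) x) → u.card ≤ s.card := by
  intro n
  induction n using Nat.strong_induction_on with
  | _ n ih =>
  intro u s hcard hu halg
  rcases Nat.eq_zero_or_pos n with h0 | hpos
  · rw [h0, Finset.card_eq_zero] at hcard
    refine Finset.card_le_card (fun x hx => ?_)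
    by_contra hxs
    exact absurd (Finset.mem_sdiff.2 ⟨hx, hxs⟩) (by rw [hcard]; simp)
  · obtain ⟨x, hx⟩ := Finset.card_pos.1 (by omega : 0 < (u \ s).card)
    have hxu : x ∈ u := (Finset.mem_sdiff.1 hx).1
    have hxs : x ∉ s := (Finset.mem_sdiff.1 hx).2
    set u' := u.erase x with hu'def
    have hx_tr : ¬ algOver (X ∪ ↑u') x := by
      have h1 := aInd_diff_singleton hu (by exact_mod_cast hxu : (x : F) ∈ (↑u : Set F))
      rwa [← Finset.coe_erase] at h1
    have hy : ∃ y ∈ s, ¬ algOver (X ∪ ↑u') y := by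
      by_contra hno
      push_neg at hno
      have hsub : X ∪ ↑s ⊆ (X ∪ ↑u') ∪ ↑s := by
        rintro z (hz | hz)
        · exact Or.inl (Or.inl hz)
        · exact Or.inr hz
      exact hx_tr (alg_trans (V := X ∪ ↑u') (W := ↑s) hno (alg_mono hsub (halg x hxu)))
    obtain ⟨y, hys, hytr⟩ := hy
    have hyu' : (y : F) ∉ (↑u' : Set F) := fun hyu' => hytr (alg_of_mem (Or.inr hyu'))
    set u'' := insert y u' with hu''def
    have hu'' : AInd X ↑u'' := by
      have h1 : AInd X ↑u' := hu.mono (Finset.coe_subset.2 (Finset.erase_subset x u))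
      have h2 : (↑u'' : Set F) = insert (y : F) ↑u' := Finset.coe_insert y u'
      rw [h2]
      exact (aInd_insert_iff hyu').2 ⟨h1, hytr⟩
    have hsd : u'' \ s = (u \ s).erase x := by
      ext z
      simp only [hu''def, hu'def, Finset.mem_sdiff, Finset.mem_erase, Finset.mem_insert]
      constructor
      · rintro ⟨rfl | ⟨hz1, hz2⟩, hzs⟩
        · exact absurd hys hzs
        · exact ⟨hz1, hz2, hzs⟩
      · rintro ⟨hz1, hz2, hzs⟩
        exact ⟨Or.inr ⟨hz1, hz2⟩, hzs⟩
    have hlt : (u'' \ s).card < n := by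
      rw [hsd]
      have := Finset.card_erase_lt_of_mem hx
      omega
    have hucard : u''.card = u.card := by
      have hyu'2 : y ∉ u' := by exact_mod_cast hyu'
      rw [Finset.card_insert_of_notMem hyu'2, Finset.card_erase_of_mem hxu]
      have := Finset.card_pos.2 ⟨x, hxu⟩
      omega
    have halg'' : ∀ z ∈ u'', algOver (X ∪ ↑s) z := by
      intro z hz
      rcases Finset.mem_insert.1 hz with rfl | hz'
      · exact alg_of_mem (Or.inr hys)
      · exact halg z (Finset.mem_of_mem_erase hz')
    have hfin := ih _ hlt u'' s rfl hu'' halg''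
    omega

end Steinitz

/-- local copy of the td definition (must match Paper.td) -/
def td' (X Y : Set F) : Cardinal :=
  ⨆ p : {s : Set F // s ⊆ Y ∧
      AlgebraicIndependent (IntermediateField.adjoin ℚ X) (fun y : s => (y : F))},
    Cardinal.mk p.1

def tdN' (X Y : Set F) : ℕ := (td' X Y).toNat

lemma td_eq (X Y : Set F) (hY : Y.Finite) (m : Finset F) (hm : ↑m ⊆ Y)
    (hAI : AInd X ↑m) (halg : ∀ y ∈ Y, algOver (X ∪ ↑m) y) :
    td' X Y = (m.card : Cardinal) := by
  haveI := Classical.decEq F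
  apply le_antisymm
  · refine ciSup_le' ?_
    rintro ⟨s, hsY, hsAI⟩
    have hsfin : s.Finite := hY.subset hsY
    have hmk : Cardinal.mk s = (hsfin.toFinset.card : Cardinal) := by
      conv_lhs => rw [← hsfin.coe_toFinset]
      exact Cardinal.mk_coe_finset
    rw [hmk]
    apply Nat.cast_le.mpr
    refine steinitz X (hsfin.toFinset \ m).card hsfin.toFinset m rfl ?_ ?_
    · show AInd X ↑hsfin.toFinset
      rw [AInd]
      have : (↑hsfin.toFinset : Set F) = s := hsfin.coe_toFinset
      rw [this]
      exact hsAI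
    · intro x hx
      rw [Set.Finite.mem_toFinset] at hx
      exact halg x (hsY hx)
  · have h1 : (m.card : Cardinal) = Cardinal.mk ↑(↑m : Set F) := (Cardinal.mk_coe_finset).symm
    rw [h1]
    exact le_ciSup (Cardinal.bddAbove_range _) (⟨(↑m : Set F), hm, hAI⟩ :
      {s : Set F // s ⊆ Y ∧
        AlgebraicIndependent (IntermediateField.adjoin ℚ X) (fun y : s => (y : F))})

lemma tdN_eq (X Y : Set F) (hY : Y.Finite) (m : Finset F) (hm : ↑m ⊆ Y)
    (hAI : AInd X ↑m) (halg : ∀ y ∈ Y, algOver (X ∪ ↑m) y) :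
    tdN' X Y = m.card := by
  rw [tdN', td_eq X Y hY m hm hAI halg, Cardinal.toNat_natCast]

lemma aInd_append (X W c : Set F) (hcW : c ⊆ W) (hc : AInd X c)
    (hW : ∀ w ∈ W, algOver (X ∪ c) w) :
    ∀ (d : Finset F), AInd (X ∪ W) ↑d → AInd X (c ∪ ↑d) := by
  haveI := Classical.decEq F
  intro d
  induction d using Finset.induction_on with
  | empty => intro _; simpa using hc
  | @insert a d had ihd =>
      intro h
      have hins : (↑(insert a d) : Set F) = insert a ↑d := Finset.coe_insert a d
      rw [hins] at h
      have h1 := (aInd_insert_iff (by exact_mod_cast had)).1 h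
      have h2 : AInd X (c ∪ ↑d) := ihd h1.1
      have hna : ¬ algOver ((X ∪ W) ∪ ↑d) a := h1.2
      have hac : a ∉ c ∪ (↑d : Set F) := by
        rintro (hac | had2)
        · exact hna (alg_of_mem (Or.inl (Or.inr (hcW hac))))
        · exact hna (alg_of_mem (Or.inr had2))
      have hgoal : (c ∪ ↑(insert a d) : Set F) = insert a (c ∪ ↑d) := by
        rw [hins, Set.union_insert]
      rw [hgoal]
      refine (aInd_insert_iff hac).2 ⟨h2, ?_⟩
      intro halg
      apply hna
      refine alg_mono ?_ halg
      rintro z (hz | (hz | hz))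
      · exact Or.inl (Or.inl hz)
      · exact Or.inl (Or.inr (hcW hz))
      · exact Or.inr hz

lemma tdN_tower (X Y Z : Set F) (hY : Y.Finite) (hZ : Z.Finite) :
    tdN' X (Y ∪ Z) = tdN' (X ∪ Z) Y + tdN' X Z := by
  haveI := Classical.decEq F
  obtain ⟨mz, hmzZ, hmzAI, hmzalg⟩ := exists_max_aInd X Z
  obtain ⟨my, hmyY, hmyAI, hmyalg⟩ := exists_max_aInd (X ∪ Z) Y
  have hmzfin : mz.Finite := hZ.subset hmzZ
  have hmyfin : my.Finite := hY.subset hmyY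
  set c := hmzfin.toFinset with hc
  set d := hmyfin.toFinset with hd
  have hcc : (↑c : Set F) = mz := hmzfin.coe_toFinset
  have hdc : (↑d : Set F) = my := hmyfin.coe_toFinset
  have hdisj : Disjoint c d := by
    rw [Finset.disjoint_left]
    intro a hac had
    have ha1 : a ∈ mz := by rw [← hcc]; exact_mod_cast hac
    have ha2 : a ∈ my := by rw [← hdc]; exact_mod_cast had
    have htr : ¬ algOver (X ∪ Z) a := hmyAI.transcendental ⟨a, ha2⟩
    exact htr (alg_of_mem (Or.inr (hmzZ ha1)))
  have hAIm : AInd X (mz ∪ ↑d) := by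
    refine aInd_append X Z mz hmzZ hmzAI hmzalg d ?_
    rw [AInd, hdc]
    exact hmyAI
  have hmcoe : (↑(c ∪ d) : Set F) = mz ∪ my := by
    rw [Finset.coe_union, hcc, hdc]
  have h1 : tdN' X (Y ∪ Z) = (c ∪ d).card := by
    refine tdN_eq X (Y ∪ Z) (hY.union hZ) (c ∪ d) ?_ ?_ ?_
    · rw [hmcoe]
      exact Set.union_subset (fun a ha => Or.inr (hmzZ ha)) (fun a ha => Or.inl (hmyY ha))
    · rw [AInd, hmcoe, ← hdc]
      exact hAIm
    · rw [hmcoe]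
      rintro w (hw | hw)
      · -- w ∈ Y
        refine alg_trans (V := X ∪ (mz ∪ my)) (W := Z) ?_ ?_
        · intro b hb
          exact alg_mono (by
            rintro z (hz | hz)
            · exact Or.inl hz
            · exact Or.inr (Or.inl hz)) (hmzalg b hb)
        · refine alg_mono ?_ (hmyalg w hw)
          rintro z ((hz | hz) | hz)
          · exact Or.inl (Or.inl hz)
          · exact Or.inr hz
          · exact Or.inl (Or.inr (Or.inr hz))
      · -- w ∈ Z
        exact alg_mono (by
          rintro z (hz | hz)
          · exact Or.inl hz
          · exact Or.inr (Or.inl hz)) (hmzalg w hw)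
  have h2 : tdN' (X ∪ Z) Y = d.card := by
    refine tdN_eq (X ∪ Z) Y hY d (by rw [hdc]; exact hmyY) (by rw [AInd, hdc]; exact hmyAI) ?_
    intro y hy
    refine alg_mono ?_ (hmyalg y hy)
    rw [hdc]
  have h3 : tdN' X Z = c.card := by
    refine tdN_eq X Z hZ c (by rw [hcc]; exact hmzZ) (by rw [AInd, hcc]; exact hmzAI) ?_
    intro z hz
    refine alg_mono ?_ (hmzalg z hz)
    rw [hcc]
  rw [h1, h2, h3, Finset.card_union_of_disjoint hdisj]
  omega

lemma tdN_invar (X' X'' W : Set F) (hW : W.Finite) (hsub : X'' ⊆ X')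
    (halg' : ∀ a ∈ X', algOver X'' a) : tdN' X' W = tdN' X'' W := by
  obtain ⟨m, hmW, hAI, halg⟩ := exists_max_aInd X' W
  have hmfin := hW.subset hmW
  have hmc : (↑hmfin.toFinset : Set F) = m := hmfin.coe_toFinset
  rw [tdN_eq X' W hW hmfin.toFinset (by rw [hmc]; exact hmW)
    (by rw [AInd, hmc]; exact hAI) (by rw [hmc]; exact fun y hy => halg y hy)]
  refine (tdN_eq X'' W hW hmfin.toFinset (by rw [hmc]; exact hmW)
    (by rw [AInd, hmc]; exact aInd_base_down hsub hAI) ?_).symm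
  rw [hmc]
  intro y hy
  refine alg_trans (V := X'' ∪ m) (W := X') ?_ ?_
  · intro b hb
    exact alg_mono Set.subset_union_left (halg' b hb)
  · refine alg_mono ?_ (halg y hy)
    rintro z (hz | hz)
    · exact Or.inr hz
    · exact Or.inl (Or.inr hz)

section Ldim

def ldim' (X Y : Set F) : Cardinal :=
  Module.rank ℚ (Submodule.span ℚ ((Submodule.span ℚ X).mkQ '' Y))

def ldimN' (X Y : Set F) : ℕ := (ldim' X Y).toNat

lemma ldim_lt_aleph0 (X : Set F) {Y : Set F} (hY : Y.Finite) : ldim' X Y < Cardinal.aleph0 := by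
  exact lt_of_le_of_lt (rank_span_le _) (hY.image _).lt_aleph0

lemma ldim_congr {X X' : Set F} (h : Submodule.span ℚ X = Submodule.span ℚ X') (Y : Set F) :
    ldim' X Y = ldim' X' Y := by
  rw [ldim', ldim', h]

lemma ldim_tower_card (X Y Z : Set F) :
    ldim' X (Y ∪ Z) = ldim' (X ∪ Z) Y + ldim' X Z := by
  set V0 := Submodule.span ℚ X with hV0
  set V1 := Submodule.span ℚ (X ∪ Z) with hV1
  have hV01 : V0 ≤ V1 := Submodule.span_mono Set.subset_union_left
  set φ : (F ⧸ V0) →ₗ[ℚ] (F ⧸ V1) :=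
    Submodule.mapQ V0 V1 LinearMap.id (fun x hx => hV01 hx) with hφ
  have hφ_mk : ∀ x : F, φ (V0.mkQ x) = V1.mkQ x := by
    intro x
    simp [hφ, Submodule.mapQ_apply]
  have hker : LinearMap.ker φ = Submodule.span ℚ (V0.mkQ '' Z) := by
    have h1 : LinearMap.ker φ = Submodule.map V0.mkQ V1 := by
      ext z
      obtain ⟨w, rfl⟩ := Submodule.mkQ_surjective V0 z
      simp only [LinearMap.mem_ker, hφ_mk]
      rw [Submodule.mkQ_apply, Submodule.Quotient.mk_eq_zero]
      constructor
      · intro hw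
        exact ⟨w, hw, rfl⟩
      · rintro ⟨y, hy, hyw⟩
        have h5 : y - w ∈ V0 := by
          rwa [Submodule.mkQ_apply, Submodule.mkQ_apply, Submodule.Quotient.eq] at hyw
        have h6 : y - (y - w) ∈ V1 := sub_mem hy (hV01 h5)
        simpa using h6
    rw [h1, hV1, ← Submodule.span_image, Set.image_union]
    have h2 : V0.mkQ '' X ⊆ {0} := by
      rintro _ ⟨x, hx, rfl⟩
      have hx0 : x ∈ V0 := Submodule.subset_span hx
      simp [Submodule.mkQ_apply, Submodule.Quotient.mk_eq_zero, hx0]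
    rw [Submodule.span_union]
    have h3 : Submodule.span ℚ (V0.mkQ '' X) = ⊥ := by
      refine le_antisymm ?_ bot_le
      refine Submodule.span_le.2 (fun z hz => ?_)
      have := h2 hz
      simp only [Set.mem_singleton_iff] at this
      simp [this]
    rw [h3, bot_sup_eq]
  set W := Submodule.span ℚ (V0.mkQ '' (Y ∪ Z)) with hW
  set ψ : W →ₗ[ℚ] (F ⧸ V1) := φ.comp W.subtype with hψ
  have hrange : LinearMap.range ψ = Submodule.span ℚ (V1.mkQ '' Y) := by
    have h1 : LinearMap.range ψ = Submodule.map φ W := by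
      rw [hψ, LinearMap.range_comp, Submodule.range_subtype]
    rw [h1, hW, Submodule.map_span]
    have h2 : φ '' (V0.mkQ '' (Y ∪ Z)) = V1.mkQ '' (Y ∪ Z) := by
      rw [← Set.image_comp]
      refine Set.image_congr (fun x _ => ?_)
      exact hφ_mk x
    rw [h2, Set.image_union, Submodule.span_union]
    have h3 : Submodule.span ℚ (V1.mkQ '' Z) = ⊥ := by
      refine le_antisymm ?_ bot_le
      refine Submodule.span_le.2 ?_
      rintro _ ⟨z, hz, rfl⟩
      have hz0 : z ∈ V1 := Submodule.subset_span (Set.mem_union_right X hz)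
      simp [Submodule.mkQ_apply, Submodule.Quotient.mk_eq_zero, hz0]
    rw [h3, sup_bot_eq]
  have hkerψ : LinearMap.ker ψ = Submodule.comap W.subtype (Submodule.span ℚ (V0.mkQ '' Z)) := by
    rw [hψ, LinearMap.ker_comp, hker]
  have hUW : Submodule.span ℚ (V0.mkQ '' Z) ≤ W :=
    Submodule.span_mono (Set.image_mono Set.subset_union_right)
  have hrk := LinearMap.rank_range_add_rank_ker ψ
  rw [hrange, hkerψ] at hrk
  have hkrank : Module.rank ℚ (Submodule.comap W.subtype (Submodule.span ℚ (V0.mkQ '' Z)))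
      = Module.rank ℚ (Submodule.span ℚ (V0.mkQ '' Z)) :=
    (Submodule.comapSubtypeEquivOfLe hUW).rank_eq
  rw [hkrank] at hrk
  rw [ldim', ldim', ldim']
  rw [← hV0, ← hV1, ← hW]
  exact hrk.symm

lemma ldimN_tower (X Y Z : Set F) (hY : Y.Finite) (hZ : Z.Finite) :
    ldimN' X (Y ∪ Z) = ldimN' (X ∪ Z) Y + ldimN' X Z := by
  rw [ldimN', ldimN', ldimN', ldim_tower_card X Y Z,
    Cardinal.toNat_add (ldim_lt_aleph0 (X ∪ Z) hY) (ldim_lt_aleph0 X hZ)]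

lemma ldimN_congr {X X' : Set F} (h : Submodule.span ℚ X = Submodule.span ℚ X') (Y : Set F) :
    ldimN' X Y = ldimN' X' Y := by
  rw [ldimN', ldimN', ldim_congr h]

end Ldim


end PredimensionTheory


section Acl

/-- the subfield of elements algebraic over `ℚ(X)` -/
def aclSubfield (X : Set F) : Subfield F where
  carrier := {a : F | algOver X a}
  one_mem' := isAlgebraic_one
  zero_mem' := isAlgebraic_zero
  mul_mem' := fun {a b} ha hb =>
    ((isAlgebraic_iff_isIntegral.1 ha).mul (isAlgebraic_iff_isIntegral.1 hb)).isAlgebraic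
  add_mem' := fun {a b} ha hb =>
    ((isAlgebraic_iff_isIntegral.1 ha).add (isAlgebraic_iff_isIntegral.1 hb)).isAlgebraic
  neg_mem' := fun {a} ha => ((isAlgebraic_iff_isIntegral.1 ha).neg).isAlgebraic
  inv_mem' := by
    intro a ha
    have hai : IsIntegral (IntermediateField.adjoin ℚ X) a := isAlgebraic_iff_isIntegral.1 ha
    have h2 := Subalgebra.inv_mem_of_algebraic
      (A := integralClosure (IntermediateField.adjoin ℚ X) F)
      (x := ⟨a, hai⟩) ha
    exact isAlgebraic_iff_isIntegral.2 h2

lemma mem_aclSubfield {X : Set F} {a : F} : a ∈ aclSubfield X ↔ algOver X a := Iff.rfl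

end Acl

section ExpAlg

lemma exp_nsmul' (E : PEField F) {a : F} (ha : a ∈ E.D) (n : ℕ) :
    E.exp (n • a) = E.exp a ^ n := by
  induction n with
  | zero => simpa using E.exp_zero
  | succ n ih =>
      rw [succ_nsmul, E.exp_add _ (nsmul_mem ha n) _ ha, ih, pow_succ]

lemma exp_neg' (E : PEField F) {a : F} (ha : a ∈ E.D) :
    E.exp (-a) = (E.exp a)⁻¹ := by
  have h := E.exp_add a ha (-a) (neg_mem ha)
  rw [add_neg_cancel, E.exp_zero] at h
  field_simp [E.exp_ne_zero a ha]
  rw [mul_comm]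
  exact h.symm

lemma exp_zsmul' (E : PEField F) {a : F} (ha : a ∈ E.D) (z : ℤ) :
    E.exp (z • a) = E.exp a ^ z := by
  cases z with
  | ofNat n =>
      rw [Int.ofNat_eq_coe, natCast_zsmul, exp_nsmul' E ha, zpow_natCast]
  | negSucc n =>
      rw [negSucc_zsmul, exp_neg' E (nsmul_mem ha (n+1)), exp_nsmul' E ha, zpow_negSucc]

lemma exp_span_alg (E : PEField F) (B S : Set F) (hS : S ⊆ (E.D : Set F))
    (hSalg : ∀ x ∈ S, algOver B (E.exp x)) :
    ∀ w ∈ Submodule.span ℚ S, w ∈ E.D ∧ algOver B (E.exp w) := by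
  let M : Submodule ℚ F :=
    { carrier := {w : F | w ∈ E.D ∧ algOver B (E.exp w)}
      zero_mem' := ⟨zero_mem _, by
        rw [E.exp_zero]
        exact isAlgebraic_one⟩
      add_mem' := fun {a b} ha hb => ⟨add_mem ha.1 hb.1, by
        rw [E.exp_add a ha.1 b hb.1]
        exact (aclSubfield B).mul_mem ha.2 hb.2⟩
      smul_mem' := by
        intro q w hw
        refine ⟨E.D.smul_mem q hw.1, ?_⟩
        have hqd : 0 < q.den := q.den_pos
        refine IsAlgebraic.of_pow hqd ?_
        have hsm : q.den • (q • w) = q.num • w := by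
          rw [← Nat.cast_smul_eq_nsmul ℚ q.den (q • w), smul_smul,
            ← Int.cast_smul_eq_zsmul ℚ q.num w]
          congr 1
          rw [mul_comm]
          exact_mod_cast Rat.mul_den_eq_num q
        have h1 : E.exp (q • w) ^ q.den = E.exp w ^ q.num := by
          rw [← exp_nsmul' E (E.D.smul_mem q hw.1) q.den, hsm, exp_zsmul' E hw.1]
        rw [h1]
        exact (aclSubfield B).zpow_mem hw.2 q.num }
  intro w hw
  have hle : Submodule.span ℚ S ≤ M :=
    Submodule.span_le.2 (fun x hx =>
      show x ∈ E.D ∧ algOver B (E.exp x) from ⟨hS hx, hSalg x hx⟩)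
  exact hle hw

end ExpAlg

lemma span_coe_union (S T : Set F) :
    Submodule.span ℚ ((Submodule.span ℚ S : Submodule ℚ F) ∪ T) = Submodule.span ℚ (S ∪ T) := by
  rw [Submodule.span_union, Submodule.span_union, Submodule.span_eq]

/-- the addition property of the predimension function:
`Δ_F(x̄ ∪ ȳ / A) = Δ_F(x̄ / A ∪ ȳ) + Δ_F(ȳ / A)`. -/
theorem delta_addition
    {F : Type*} [Field F] [CharZero F] [DecidableEq F] (E : PEField F)
    (A : Set F) (s t : Finset F) :
    DeltaOver E A (s ∪ t) = DeltaOver E (A ∪ ↑t) s + DeltaOver E A t := by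
  classical
  simp only [DeltaOver, Delta,
    show (PEField.top E).kerSet = E.kerSet from rfl,
    show ((PEField.top E).dom : Set F) = (E.D : Set F) from rfl]
  set D : Set F := (E.D : Set F) with hD
  set K : Set F := E.kerSet with hK
  set C : Set F := ((genSub E (K ∪ A)).carrier : Set F) with hC
  set C' : Set F := ((genSub E (K ∪ (A ∪ ↑t))).carrier : Set F) with hC'
  set DA : Set F := ((genSub E (K ∪ A)).dom : Set F) with hDA
  set DAt : Set F := ((genSub E (K ∪ (A ∪ ↑t))).dom : Set F) with hDAt
  set Ys : Set F := ↑s ∪ E.exp '' (↑s ∩ D) with hYs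
  set Zt : Set F := ↑t ∪ E.exp '' (↑t ∩ D) with hZt
  have hYsf : Ys.Finite := (s.finite_toSet).union ((s.finite_toSet.inter_of_left D).image E.exp)
  have hZtf : Zt.Finite := (t.finite_toSet).union ((t.finite_toSet.inter_of_left D).image E.exp)
  have hsetu : (↑(s ∪ t) : Set F) ∪ E.exp '' ((↑(s ∪ t) : Set F) ∩ D) = Ys ∪ Zt := by
    rw [hYs, hZt, Finset.coe_union, Set.union_inter_distrib_right, Set.image_union]
    ext x
    simp only [Set.mem_union]
    tauto
  have hsetd : (↑(s ∪ t) : Set F) ∩ D = (↑s ∩ D) ∪ (↑t ∩ D) := by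
    rw [Finset.coe_union, Set.union_inter_distrib_right]
  -- subset facts
  have hCsub : C ⊆ C' := by
    rw [hC, hC']
    apply Subfield.closure_mono
    apply Set.union_subset_union
    · exact Set.union_subset_union_right K Set.subset_union_left
    · apply Set.image_mono
      exact SetLike.coe_subset_coe.2 (Submodule.span_mono
        (Set.inter_subset_inter_left _
          (Set.union_subset_union_right K Set.subset_union_left)))
  have hAC : A ⊆ C := fun a ha => Subfield.subset_closure (Or.inl (Or.inr ha))
  have htC' : (↑t : Set F) ⊆ C' := fun a ha =>
    Subfield.subset_closure (Or.inl (Or.inr (Or.inr ha)))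
  have hEtC' : E.exp '' (↑t ∩ D) ⊆ C' := by
    rintro _ ⟨x, hx, rfl⟩
    exact Subfield.subset_closure
      (Or.inr ⟨x, Submodule.subset_span ⟨Or.inr (Or.inr hx.1), hx.2⟩, rfl⟩)
  have hexpC : ∀ x ∈ (Submodule.span ℚ ((K ∪ A) ∩ D) : Submodule ℚ F), E.exp x ∈ C :=
    fun x hx => Subfield.subset_closure (Or.inr ⟨x, hx, rfl⟩)
  have hsub : (C ∪ K) ∪ Zt ⊆ C' ∪ K := by
    rintro z ((hz | hz) | hz)
    · exact Or.inl (hCsub hz)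
    · exact Or.inr hz
    · rcases hz with hz | hz
      · exact Or.inl (htC' hz)
      · exact Or.inl (hEtC' hz)
  have halgX : ∀ a ∈ C' ∪ K, algOver ((C ∪ K) ∪ Zt) a := by
    have hcl : (C' : Set F) ⊆ (aclSubfield ((C ∪ K) ∪ Zt) : Set F) := by
      rw [hC']
      apply Subfield.closure_le.2
      rintro g (hg | hg)
      · apply mem_aclSubfield.2
        apply alg_of_mem
        rcases hg with hg | (hg | hg)
        · exact Or.inl (Or.inr hg)
        · exact Or.inl (Or.inl (hAC hg))
        · exact Or.inr (Or.inl hg)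
      · obtain ⟨x, hx, rfl⟩ := hg
        apply mem_aclSubfield.2
        refine (exp_span_alg E ((C ∪ K) ∪ Zt) ((K ∪ (A ∪ ↑t)) ∩ D)
          Set.inter_subset_right ?_ x hx).2
        rintro y ⟨hy1, hy2⟩
        apply alg_of_mem
        rcases hy1 with hy | (hy | hy)
        · exact Or.inl (Or.inl (hexpC y (Submodule.subset_span ⟨Or.inl hy, hy2⟩)))
        · exact Or.inl (Or.inl (hexpC y (Submodule.subset_span ⟨Or.inr hy, hy2⟩)))
        · exact Or.inr (Or.inr ⟨y, ⟨hy, hy2⟩, rfl⟩)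
    rintro a (ha | ha)
    · exact mem_aclSubfield.1 (hcl ha)
    · exact alg_of_mem (Or.inl (Or.inr ha))
  have hTD : tdN' (C ∪ K) (Ys ∪ Zt) = tdN' (C' ∪ K) Ys + tdN' (C ∪ K) Zt := by
    rw [tdN_tower (C ∪ K) Ys Zt hYsf hZtf]
    congr 1
    exact (tdN_invar (C' ∪ K) ((C ∪ K) ∪ Zt) Ys hYsf hsub halgX).symm
  have hspaneq : Submodule.span ℚ (DAt ∪ K)
      = Submodule.span ℚ ((DA ∪ K) ∪ (↑t ∩ D)) := by
    rw [hDA, hDAt]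
    show Submodule.span ℚ ((Submodule.span ℚ ((K ∪ (A ∪ ↑t)) ∩ D) : Submodule ℚ F) ∪ K)
      = Submodule.span ℚ
        (((Submodule.span ℚ ((K ∪ A) ∩ D) : Submodule ℚ F) ∪ K) ∪ (↑t ∩ D))
    rw [span_coe_union, Set.union_assoc, span_coe_union]
    have heq : ((K ∪ (A ∪ ↑t)) ∩ D) ∪ K = ((K ∪ A) ∩ D) ∪ (K ∪ (↑t ∩ D)) := by
      ext x
      simp only [Set.mem_union, Set.mem_inter_iff]
      tauto
    rw [heq]
  have hLD : ldimN' (DA ∪ K) ((↑s ∩ D) ∪ (↑t ∩ D))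
      = ldimN' (DAt ∪ K) (↑s ∩ D) + ldimN' (DA ∪ K) (↑t ∩ D) := by
    rw [ldimN_tower (DA ∪ K) (↑s ∩ D) (↑t ∩ D)
      (s.finite_toSet.inter_of_left D) (t.finite_toSet.inter_of_left D)]
    congr 1
    exact (ldimN_congr hspaneq (↑s ∩ D)).symm
  have e1 : ∀ X Y : Set F, tdN F X Y = tdN' X Y := fun _ _ => rfl
  have e2 : ∀ X Y : Set F, ldimN F X Y = ldimN' X Y := fun _ _ => rfl
  rw [hsetu, hsetd, e1, e1, e1, e2, e2, e2, hTD, hLD]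
  push_cast
  ring

end Paper
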